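/- Let n, k be natural numbers with k ≤ n, let x ∈ (0,1) be real, and let r be a real number with 0 < r < 1/x. Then the alternative Legendre polynomial admits the contour integral representation 𝒫_{n,k}(x) = (1/(2πi)) · x^{−(n+2)} · ∮_{|z−1/x|=r} z^{−(n+k+2)} (1−z)^{n−k} / (z−1/x)^{n−k+1} dz, where the integral is taken over the circle of radius r centered at 1/x in the complex plane (which does not enclose z = 0). -/

import Mathlib

open Polynomial

/-- The alternative Legendre polynomial 𝒫_{n,k}. -/
noncomputable def ALP (n k : ℕ) : Polynomial ℝ :=
  ∑ j ∈ Finset.range (n - k + 1),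
    Polynomial.C ((-1 : ℝ) ^ j * ((n - k).choose j) * ((n + k + 1 + j).choose (n - k))) *
      Polynomial.X ^ (k + j)

open Complex Metric Finset Nat

lemma prod_range_succ_add_eq (s m : ℕ) :
    ∏ i ∈ Finset.range m, (s + 1 + i) = m ! * (s + m).choose m := by
  have h : ∏ i ∈ Finset.range m, (s + 1 + i) = (s + 1).ascFactorial m := by
    induction m with
    | zero => simp
    | succ m ih => rw [Finset.prod_range_succ, ih, Nat.ascFactorial_succ, mul_comm]
  rw [h, Nat.ascFactorial_eq_factorial_mul_choose]

lemma circleIntegral_finset_sum {ι : Type*} (s : Finset ι) (f : ι → ℂ → ℂ) {c : ℂ} {R : ℝ}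
    (h : ∀ i ∈ s, CircleIntegrable (f i) c R) :
    (∮ z in C(c, R), ∑ i ∈ s, f i z) = ∑ i ∈ s, ∮ z in C(c, R), f i z := by
  simp only [circleIntegral]
  rw [← intervalIntegral.integral_finset_sum fun i hi => (h i hi).out]
  simp [Finset.mul_sum]

lemma circleIntegral_zpow_div_pow (p : ℤ) (m : ℕ) (c : ℂ) (r : ℝ) (hr : 0 < r)
    (h0 : (0:ℂ) ∉ closedBall c r) :
    (∮ z in C(c, r), z ^ p / (z - c) ^ (m + 1)) =
      (2 * Real.pi * Complex.I) * (m ! : ℂ)⁻¹ *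
        ((∏ i ∈ Finset.range m, ((p : ℂ) - i)) * c ^ (p - m)) := by
  lift r to NNReal using hr.le with r' hr'
  have hr0 : 0 < r' := by simpa using hr
  have hd : DifferentiableOn ℂ (fun z : ℂ => z ^ p) (closedBall c r') := fun z hz =>
    (differentiableAt_zpow.mpr (Or.inl (ne_of_mem_of_not_mem hz h0))).differentiableWithinAt
  have h := hd.hasFPowerSeriesOnBall hr0
  have key := h.factorial_smul (1 : ℂ) m
  rw [← iteratedDeriv_eq_iteratedFDeriv, iteratedDeriv_eq_iterate, iter_deriv_zpow,
    cauchyPowerSeries_apply] at key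
  have hint : (∮ z in C(c, (r':ℝ)), ((1:ℂ) / (z - c)) ^ m • (z - c)⁻¹ • z ^ p)
      = ∮ z in C(c, (r':ℝ)), z ^ p / (z - c) ^ (m + 1) := by
    congr 1
    funext z
    simp only [smul_eq_mul, div_eq_mul_inv, one_mul, inv_pow, pow_succ, mul_inv]
    ring
  rw [hint] at key
  simp only [nsmul_eq_mul, smul_eq_mul] at key
  have h2 : (2 * (Real.pi:ℂ) * Complex.I) ≠ 0 := by
    simp [Real.pi_ne_zero, Complex.I_ne_zero, Complex.ofReal_ne_zero]
  have hm : (m ! : ℂ) ≠ 0 := Nat.cast_ne_zero.mpr m.factorial_ne_zero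
  rw [← key]
  field_simp

/-- Contour integral representation of the alternative Legendre polynomials:
the contour is the circle of radius r centered at 1/x, with 0 < r < 1/x, so it
does not enclose z = 0. -/
theorem ALP_contour_integral (n k : ℕ) (hk : k ≤ n) (x : ℝ)
    (hx : x ∈ Set.Ioo (0:ℝ) 1) (r : ℝ) (hr0 : 0 < r) (hr1 : r < 1 / x) :
    (((ALP n k).eval x : ℝ) : ℂ) =
      (1 / (2 * Real.pi * Complex.I)) * ((x : ℂ) ^ (n + 2))⁻¹ *
        ∮ z in C((1 / (x : ℂ)), r),
          z ^ (-((n : ℤ) + k + 2)) * (1 - z) ^ (n - k) /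
            (z - 1 / (x : ℂ)) ^ (n - k + 1) := by
  obtain ⟨hx0, hx1⟩ := hx
  have hxC : (x:ℂ) ≠ 0 := Complex.ofReal_ne_zero.mpr hx0.ne'
  set c : ℂ := 1 / (x:ℂ) with hc
  set m : ℕ := n - k with hmdef
  -- 0 is outside the closed ball
  have h0 : (0:ℂ) ∉ closedBall c r := by
    simp only [mem_closedBall, _root_.dist_zero_left, hc]
    have : ‖(1:ℂ) / (x:ℂ)‖ = 1 / x := by
      rw [show (1:ℂ)/(x:ℂ) = ((1/x : ℝ) : ℂ) by push_cast; ring, Complex.norm_real,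
        Real.norm_eq_abs, abs_of_pos (by positivity)]
    rw [this]
    exact not_le.mpr hr1
  -- the integrand as a finite sum on the sphere
  have hsphere : Set.EqOn
      (fun z : ℂ => z ^ (-((n : ℤ) + k + 2)) * (1 - z) ^ m / (z - c) ^ (m + 1))
      (fun z : ℂ => ∑ j ∈ Finset.range (m+1),
        ((-1:ℂ)^j * (m.choose j)) * (z ^ ((j:ℤ) - ((n:ℤ)+k+2)) / (z - c) ^ (m + 1)))
      (sphere c r) := by
    intro z hz
    have hz0 : z ≠ 0 := ne_of_mem_of_not_mem (sphere_subset_closedBall hz) h0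
    simp only
    rw [sub_eq_neg_add, add_pow, Finset.mul_sum, Finset.sum_div]
    refine Finset.sum_congr rfl fun j hj => ?_
    rw [show ((j:ℤ) - ((n:ℤ)+k+2)) = (j:ℤ) + (-((n:ℤ)+k+2)) by ring,
      zpow_add₀ hz0, zpow_natCast]
    ring
  -- circle integrability of each term
  have hintg : ∀ j ∈ Finset.range (m+1), CircleIntegrable
      (fun z : ℂ => ((-1:ℂ)^j * (m.choose j)) * (z ^ ((j:ℤ) - ((n:ℤ)+k+2)) / (z - c) ^ (m + 1)))
      c r := by
    intro j _
    refine ContinuousOn.circleIntegrable hr0.le ?_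
    intro z hz
    have hz0 : z ≠ 0 := ne_of_mem_of_not_mem (sphere_subset_closedBall hz) h0
    have hzc : z - c ≠ 0 := sub_ne_zero.mpr (ne_of_mem_sphere hz hr0.ne')
    exact (continuousAt_const.mul
      (((continuousAt_zpow₀ _ _ (Or.inl hz0))).div
        ((continuousAt_id.sub continuousAt_const).pow _) (pow_ne_zero _ hzc))).continuousWithinAt
  -- compute the integral
  rw [circleIntegral.integral_congr hr0.le hsphere, circleIntegral_finset_sum _ _ hintg]
  have hπ : (2 * (Real.pi:ℂ) * Complex.I) ≠ 0 := by
    simp [Real.pi_ne_zero, Complex.I_ne_zero, Complex.ofReal_ne_zero]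
  have hmfac : (m ! : ℂ) ≠ 0 := Nat.cast_ne_zero.mpr m.factorial_ne_zero
  -- evaluate LHS
  have hLHS : (((ALP n k).eval x : ℝ) : ℂ) =
      ∑ j ∈ Finset.range (m+1),
        ((-1:ℂ)^j * (m.choose j) * ((n+k+1+j).choose m)) * (x:ℂ)^(k+j) := by
    simp only [ALP, eval_finset_sum, eval_mul, eval_C, eval_pow, eval_X, ← hmdef]
    push_cast
    ring
  rw [hLHS, Finset.mul_sum]
  rw [← Finset.sum_range_reflect]
  refine Finset.sum_congr rfl fun j hj => ?_
  have hjm : j ≤ m := Nat.lt_succ_iff.mp (Finset.mem_range.mp hj)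
  have hmn : m ≤ n := Nat.sub_le n k
  rw [show m + 1 - 1 - j = m - j from rfl]
  -- the c-power
  have hcpow : (c : ℂ) ^ (((j:ℤ) - ((n:ℤ)+k+2)) - (m:ℤ)) = ((x:ℂ))^((2*n+2-j : ℕ)) := by
    rw [hc, one_div, inv_zpow',
      show -(((j:ℤ) - ((n:ℤ)+k+2)) - (m:ℤ)) = ((2*n+2-j : ℕ) : ℤ) by
        push_cast [hmdef, Nat.cast_sub hk, Nat.cast_sub (show j ≤ 2*n+2 by omega)]; ring,
      zpow_natCast]
  rw [circleIntegral.integral_const_mul,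
    circleIntegral_zpow_div_pow _ _ _ _ hr0 h0, hcpow]
  push_cast
  -- the finite product
  have hprod : (∏ i ∈ Finset.range m, ((j:ℂ) - ((n:ℂ)+(k:ℂ)+2) - (i:ℂ)))
      = (-1:ℂ)^m * ((m ! : ℕ) : ℂ) * (((n+k+1-j+m).choose m : ℕ) : ℂ) := by
    have h1 : ∀ i ∈ Finset.range m, (j:ℂ) - ((n:ℂ)+(k:ℂ)+2) - (i:ℂ)
        = (-1) * (((n+k+1-j) + 1 + i : ℕ) : ℂ) := by
      intro i _
      have hjle : j ≤ n + k + 1 := by omega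
      push_cast [Nat.cast_sub hjle]
      ring
    rw [Finset.prod_congr rfl h1, Finset.prod_mul_distrib, Finset.prod_const,
      ← Nat.cast_prod, prod_range_succ_add_eq, Finset.card_range]
    push_cast
    ring
  have hsign : ((-1:ℂ))^(m-j) = (-1)^m * (-1)^j := by
    rw [pow_sub₀ _ (by norm_num) hjm]
    simp only [div_eq_mul_inv, ← inv_pow, inv_neg_one]
  rw [hprod, hsign, Nat.choose_symm hjm, show n+k+1+(m-j) = n+k+1-j+m by omega,
    show 2*n+2-j = (n+2)+(k+(m-j)) by omega, pow_add]
  field_simp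
  ring
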